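/- For all integers K ≥ 1 and N ≥ K + 2: ∫₀^∞ α^{K−1} · Γ(1+α)/Γ(α+N) dα ≥ Γ(K) Γ(K+1) Γ(N−K−1) / ( Γ(N−1) Γ(N) ). -/

import Mathlib

open MeasureTheory Set Nat

lemma aux_gamma_add_nat {x : ℝ} (hx : 0 < x) (n : ℕ) :
    Real.Gamma (x + n) = Real.Gamma x * ∏ j ∈ Finset.range n, (x + j) := by
  induction n with
  | zero => simp
  | succ n ih =>
    have hxn : x + (n : ℝ) ≠ 0 := by positivity
    have h2 : x + ((n + 1 : ℕ) : ℝ) = (x + n) + 1 := by push_cast; ring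
    rw [h2, Real.Gamma_add_one hxn, ih, Finset.prod_range_succ]
    ring

lemma aux_beta {x : ℝ} (hx : 0 < x) (n : ℕ) :
    ∫ t in Set.Ioo (0:ℝ) 1, t ^ x * (1 - t) ^ n
      = ((n !) : ℝ) / ∏ j ∈ Finset.range (n + 1), (x + 1 + j) := by
  have hu : 0 < Complex.re ((x : ℂ) + 1) := by simp; positivity
  have h := Complex.betaIntegral_eval_nat_add_one_right hu n
  have key : Complex.betaIntegral ((x:ℂ)+1) (n+1)
      = ((∫ t in (0:ℝ)..1, t ^ x * (1 - t) ^ n : ℝ) : ℂ) := by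
    rw [Complex.betaIntegral, ← intervalIntegral.integral_ofReal]
    refine intervalIntegral.integral_congr fun s hs => ?_
    rw [Set.uIcc_of_le (by norm_num : (0:ℝ) ≤ 1)] at hs
    push_cast
    rw [Complex.ofReal_cpow hs.1, add_sub_cancel_right, add_sub_cancel_right,
      Complex.cpow_natCast]
  rw [key] at h
  have h2 : ((((n !)) : ℝ) / ∏ j ∈ Finset.range (n + 1), (x + 1 + j) : ℝ)
      = ((((n !)) : ℂ) / ∏ j ∈ Finset.range (n + 1), ((x:ℂ) + 1 + j) : ℂ).re := by
    rw [show ((((n !) : ℂ)) / ∏ j ∈ Finset.range (n + 1), ((x:ℂ) + 1 + j) : ℂ)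
        = (((((n !) : ℝ)) / ∏ j ∈ Finset.range (n + 1), (x + 1 + j) : ℝ) : ℂ) by push_cast; ring]
    rw [Complex.ofReal_re]
  rw [h2, ← h, Complex.ofReal_re, intervalIntegral.integral_of_le zero_le_one,
    integral_Ioc_eq_integral_Ioo]

lemma aux_prod_fact (k m : ℕ) :
    ((k !) : ℝ) * ∏ j ∈ Finset.range m, ((k:ℝ) + 1 + j) = (((k + m)!) : ℝ) := by
  induction m with
  | zero => simp
  | succ m ih =>
    rw [Finset.prod_range_succ, ← mul_assoc, ih, show k + (m+1) = (k+m) + 1 from rfl,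
      Nat.factorial_succ]
    push_cast; ring

lemma aux_meas1 (c : ℝ) (n : ℕ) : Measurable fun t : ℝ => t ^ c * (1 - t) ^ n :=
  (measurable_id.pow measurable_const).mul
    ((measurable_const.sub measurable_id).pow measurable_const)

lemma aux_meas2 (k n : ℕ) (c : ℝ) :
    Measurable fun p : ℝ × ℝ => p.1 ^ k * (p.2 ^ p.1 * (1 - p.2) ^ n) / c :=
  ((measurable_fst.pow measurable_const).mul
    ((measurable_snd.pow measurable_fst).mul
      ((measurable_const.sub measurable_snd).pow measurable_const))).div measurable_const

lemma aux_meas3 (k m : ℕ) :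
    Measurable fun α : ℝ => α ^ k * (∏ j ∈ Finset.range m, (α + 1 + (j:ℝ)))⁻¹ :=
  (measurable_id.pow measurable_const).mul
    ((Finset.measurable_prod _ fun j _ => (measurable_id.add_const 1).add_const _).inv)

theorem gamma_ratio_integral_lower_bound (K N : ℕ) (hK : 1 ≤ K) (hN : K + 2 ≤ N) :
    Real.Gamma K * Real.Gamma (K + 1) * Real.Gamma ((N : ℝ) - K - 1)
        / (Real.Gamma ((N : ℝ) - 1) * Real.Gamma N)
      ≤ ∫ α in Set.Ioi (0 : ℝ), α ^ (K - 1) * (Real.Gamma (1 + α) / Real.Gamma (α + N)) := by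
  obtain ⟨n, rfl⟩ : ∃ n, N = n + 2 := ⟨N - 2, by omega⟩
  have hKn : K ≤ n := by omega
  set f : ℝ → ℝ := fun α => α ^ (K - 1) * (Real.Gamma (1 + α) / Real.Gamma (α + (n + 2 : ℕ)))
    with hfdef
  set P : ℝ → ℝ := fun α => ∏ j ∈ Finset.range (n+1), (α + 1 + j) with hPdef
  have hPpos : ∀ α : ℝ, 0 < α → 0 < P α := fun α hα =>
    Finset.prod_pos fun j _ => by positivity
  -- Gamma ratio as inverse product
  have hf : ∀ α : ℝ, 0 < α →
      Real.Gamma (1 + α) / Real.Gamma (α + (n + 2 : ℕ)) = (P α)⁻¹ := by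
    intro α hα
    have h1 : Real.Gamma (α + (n + 2 : ℕ)) = Real.Gamma (α + 1) * P α := by
      have := aux_gamma_add_nat (x := α + 1) (by linarith) (n + 1)
      rw [show α + ((n + 2 : ℕ) : ℝ) = (α + 1) + ((n + 1 : ℕ) : ℝ) by push_cast; ring, this]
    have hΓ : Real.Gamma (α + 1) ≠ 0 := (Real.Gamma_pos_of_pos (by linarith)).ne'
    rw [h1, show (1:ℝ) + α = α + 1 by ring]
    field_simp
  -- Beta representation
  have hbeta : ∀ α : ℝ, 0 < α →
      (P α)⁻¹ = (((n !) : ℝ))⁻¹ * ∫ t in Ioo (0:ℝ) 1, t ^ α * (1 - t) ^ n := by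
    intro α hα
    rw [aux_beta hα n]
    have : P α ≠ 0 := (hPpos α hα).ne'
    have hn0 : (((n !)) : ℝ) ≠ 0 := by positivity
    rw [hPdef]
    field_simp
  -- integrand over the square
  set F : ℝ → ℝ → ENNReal :=
    fun α t => ENNReal.ofReal (α ^ (K - 1) * (t ^ α * (1 - t) ^ n) / ((n !) : ℝ)) with hFdef
  have hn0 : (0:ℝ) < ((n !) : ℝ) := by positivity
  -- integrability in t for fixed α > 0
  have hIntT : ∀ α : ℝ, 0 < α →
      IntegrableOn (fun t : ℝ => α ^ (K - 1) * (t ^ α * (1 - t) ^ n) / ((n !) : ℝ))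
        (Ioo 0 1) := by
    intro α hα
    have hb : IntegrableOn (fun t : ℝ => t ^ α * (1 - t) ^ n) (Ioo 0 1) := by
      apply Measure.integrableOn_of_bounded (M := 1)
      · exact (measure_Ioo_lt_top).ne
      · exact (aux_meas1 α n).aestronglyMeasurable
      · filter_upwards [ae_restrict_mem measurableSet_Ioo] with t ht
        have h1 : t ^ α ≤ 1 := Real.rpow_le_one ht.1.le ht.2.le hα.le
        have h2 : (1 - t) ^ n ≤ 1 := pow_le_one₀ (by linarith [ht.2]) (by linarith [ht.1])
        have h3 : (0:ℝ) ≤ t ^ α := Real.rpow_nonneg ht.1.le α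
        have h4 : (0:ℝ) ≤ (1 - t) ^ n := pow_nonneg (by linarith [ht.2]) n
        rw [Real.norm_eq_abs, abs_of_nonneg (mul_nonneg h3 h4)]
        nlinarith
    simpa [mul_div_assoc, mul_assoc, IntegrableOn] using ((hb.const_mul (α ^ (K - 1))).div_const (((n !)) : ℝ))
  -- step 1 : rewrite the lintegral of f as double lintegral
  have step1 : (∫⁻ α in Ioi (0:ℝ), ENNReal.ofReal (f α))
      = ∫⁻ α in Ioi (0:ℝ), ∫⁻ t in Ioo (0:ℝ) 1, F α t := by
    refine setLIntegral_congr_fun measurableSet_Ioi (fun α hα => ?_)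
    have e1 : f α = ∫ t in Ioo (0:ℝ) 1, α ^ (K - 1) * (t ^ α * (1 - t) ^ n) / ((n !) : ℝ) := by
      rw [hfdef]
      simp only
      rw [hf α hα, hbeta α hα]
      rw [show (fun t : ℝ => α ^ (K - 1) * (t ^ α * (1 - t) ^ n) / ((n !) : ℝ))
          = fun t : ℝ => (α ^ (K - 1) / ((n !) : ℝ)) * (t ^ α * (1 - t) ^ n) by
        funext t; ring]
      rw [integral_const_mul]
      ring
    rw [e1, hFdef]
    refine ofReal_integral_eq_lintegral_ofReal (hIntT α hα) ?_
    filter_upwards [ae_restrict_mem measurableSet_Ioo] with t ht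
    have h3 : (0:ℝ) ≤ t ^ α := Real.rpow_nonneg ht.1.le α
    have h4 : (0:ℝ) ≤ (1 - t) ^ n := pow_nonneg (by linarith [ht.2]) n
    exact div_nonneg (mul_nonneg (pow_nonneg hα.le _) (mul_nonneg h3 h4)) hn0.le
  -- Tonelli
  have step2 : (∫⁻ α in Ioi (0:ℝ), ∫⁻ t in Ioo (0:ℝ) 1, F α t)
      = ∫⁻ t in Ioo (0:ℝ) 1, ∫⁻ α in Ioi (0:ℝ), F α t := by
    refine lintegral_lintegral_swap ?_
    exact ((aux_meas2 (K-1) n (((n !)) : ℝ)).ennreal_ofReal).aemeasurable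
  -- inner integral evaluation
  set v : ℝ → ℝ := fun t =>
    (1 - t) ^ n / (((n !)) : ℝ) * ((1 / (-Real.log t)) ^ (K:ℝ) * Real.Gamma K) with hvdef
  have hKpos : (0:ℝ) < (K:ℝ) := by exact_mod_cast hK.trans_lt' Nat.zero_lt_one
  have step3 : ∀ t ∈ Ioo (0:ℝ) 1,
      (∫⁻ α in Ioi (0:ℝ), F α t) = ENNReal.ofReal (v t) := by
    intro t ht
    have hb : 0 < -Real.log t := by
      have := Real.log_neg ht.1 ht.2; linarith
    have heq : ∀ α ∈ Ioi (0:ℝ),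
        (1 - t) ^ n / (((n !)) : ℝ) * (α ^ ((K:ℝ) - 1) * Real.exp (-(-Real.log t * α)))
          = α ^ (K - 1) * (t ^ α * (1 - t) ^ n) / (((n !)) : ℝ) := by
      intro α hα
      have ht' : t ^ α = Real.exp (-(-Real.log t * α)) := by
        rw [Real.rpow_def_of_pos ht.1]; ring_nf
      rw [← Real.rpow_natCast α (K - 1), Nat.cast_sub hK, Nat.cast_one, ht']
      ring
    have hbase : IntegrableOn
        (fun α : ℝ => α ^ ((K:ℝ) - 1) * Real.exp (-(-Real.log t) * α)) (Ioi 0) := by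
      have h := integrableOn_rpow_mul_exp_neg_mul_rpow
        (s := (K:ℝ) - 1) (p := 1) (b := -Real.log t) (by linarith) one_pos hb
      simpa [Real.rpow_one] using h
    have hInt : IntegrableOn
        (fun α : ℝ => α ^ (K - 1) * (t ^ α * (1 - t) ^ n) / (((n !)) : ℝ)) (Ioi 0) := by
      refine IntegrableOn.congr_fun (hbase.const_mul ((1 - t) ^ n / (((n !)) : ℝ)))
        (fun α hα => ?_) measurableSet_Ioi
      rw [show -(-Real.log t) * α = -(-Real.log t * α) by ring]
      exact heq α hα
    have hreal : (∫ α in Ioi (0:ℝ), α ^ (K - 1) * (t ^ α * (1 - t) ^ n) / (((n !)) : ℝ)) = v t := by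
      rw [← setIntegral_congr_fun measurableSet_Ioi heq, integral_const_mul,
        Real.integral_rpow_mul_exp_neg_mul_Ioi hKpos hb, hvdef]
    calc ∫⁻ α in Ioi (0:ℝ), F α t
        = ENNReal.ofReal (∫ α in Ioi (0:ℝ),
            α ^ (K - 1) * (t ^ α * (1 - t) ^ n) / (((n !)) : ℝ)) := by
          refine (ofReal_integral_eq_lintegral_ofReal hInt ?_).symm
          filter_upwards [ae_restrict_mem measurableSet_Ioi] with α hα
          have h3 : (0:ℝ) ≤ t ^ α := Real.rpow_nonneg ht.1.le α
          have h4 : (0:ℝ) ≤ (1 - t) ^ n := pow_nonneg (by linarith [ht.2]) n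
          exact div_nonneg (mul_nonneg (pow_nonneg (le_of_lt hα) _) (mul_nonneg h3 h4)) hn0.le
      _ = ENNReal.ofReal (v t) := by rw [hreal]
  have hL : (∫⁻ α in Ioi (0:ℝ), ENNReal.ofReal (f α))
      = ∫⁻ t in Ioo (0:ℝ) 1, ENNReal.ofReal (v t) := by
    rw [step1, step2]
    exact setLIntegral_congr_fun measurableSet_Ioo
      step3
  -- lower bound function
  set low : ℝ → ℝ := fun t => Real.Gamma K / (((n !)) : ℝ) * (t ^ (K:ℝ) * (1 - t) ^ (n - K))
    with hlowdef
  have hΓK : 0 < Real.Gamma K := Real.Gamma_pos_of_pos hKpos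
  have hlow_le : ∀ t ∈ Ioo (0:ℝ) 1, low t ≤ v t := by
    intro t ht
    have h1t : 0 < 1 - t := by linarith [ht.2]
    have hb : 0 < -Real.log t := by have := Real.log_neg ht.1 ht.2; linarith
    have hble : -Real.log t ≤ (1 - t) / t := by
      have h := Real.log_le_sub_one_of_pos (inv_pos.mpr ht.1)
      rw [Real.log_inv] at h
      have h2 : (1 - t) / t = 1 / t - 1 := by
        rw [sub_div, div_self ht.1.ne', one_div]
      rw [h2, one_div]
      linarith
    have hinv : t / (1 - t) ≤ 1 / (-Real.log t) := by
      rw [div_le_div_iff₀ h1t hb]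
      have hble' : -Real.log t * t ≤ 1 - t := (le_div_iff₀ ht.1).mp hble
      nlinarith [hble']
    have hpow : (t / (1 - t)) ^ K ≤ (1 / (-Real.log t)) ^ K :=
      pow_le_pow_left₀ (div_nonneg ht.1.le h1t.le) hinv K
    have hv' : v t = (1 - t) ^ n / (((n !)) : ℝ) * ((1 / (-Real.log t)) ^ K * Real.Gamma K) := by
      rw [hvdef]; simp only; rw [Real.rpow_natCast]
    have hlow' : low t = Real.Gamma K / (((n !)) : ℝ) * (t ^ K * (1 - t) ^ (n - K)) := by
      rw [hlowdef]; simp only; rw [Real.rpow_natCast]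
    rw [hv', hlow']
    have hsplit : (1 - t) ^ n = (1 - t) ^ K * (1 - t) ^ (n - K) := by
      rw [← pow_add]; congr 1; omega
    have hkey : t ^ K * (1 - t) ^ (n - K) ≤ (1 - t) ^ n * (1 / (-Real.log t)) ^ K := by
      calc t ^ K * (1 - t) ^ (n - K)
          = (1 - t) ^ n * (t / (1 - t)) ^ K := by
            rw [hsplit, div_pow]; field_simp
        _ ≤ (1 - t) ^ n * (1 / (-Real.log t)) ^ K :=
            mul_le_mul_of_nonneg_left hpow (by positivity)
    calc Real.Gamma K / (((n !)) : ℝ) * (t ^ K * (1 - t) ^ (n - K))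
        ≤ Real.Gamma K / (((n !)) : ℝ) * ((1 - t) ^ n * (1 / (-Real.log t)) ^ K) :=
          mul_le_mul_of_nonneg_left hkey (by positivity)
      _ = (1 - t) ^ n / (((n !)) : ℝ) * ((1 / (-Real.log t)) ^ K * Real.Gamma K) := by ring
  -- finiteness
  have hvfin : (∫⁻ t in Ioo (0:ℝ) 1, ENNReal.ofReal (v t)) ≠ ⊤ := by
    have hbound : ∀ t ∈ Ioo (0:ℝ) 1, v t ≤ Real.Gamma K / (((n !)) : ℝ) := by
      intro t ht
      have h1t : 0 < 1 - t := by linarith [ht.2]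
      have hb : 0 < -Real.log t := by have := Real.log_neg ht.1 ht.2; linarith
      have hble : 1 - t ≤ -Real.log t := by
        have h := Real.log_le_sub_one_of_pos ht.1; linarith
      have hinv : 1 / (-Real.log t) ≤ 1 / (1 - t) := one_div_le_one_div_of_le h1t hble
      have hpow : (1 / (-Real.log t)) ^ K ≤ (1 / (1 - t)) ^ K :=
        pow_le_pow_left₀ (by positivity) hinv K
      have hv' : v t = (1 - t) ^ n / (((n !)) : ℝ) * ((1 / (-Real.log t)) ^ K * Real.Gamma K) := by
        rw [hvdef]; simp only; rw [Real.rpow_natCast]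
      have hsplit : (1 - t) ^ n = (1 - t) ^ K * (1 - t) ^ (n - K) := by
        rw [← pow_add]; congr 1; omega
      have e1 : (1 - t) ^ n * (1 / (-Real.log t)) ^ K ≤ 1 := by
        have h2 : (1 - t) ^ n * (1 / (1 - t)) ^ K = (1 - t) ^ (n - K) := by
          rw [hsplit, one_div, inv_pow]; field_simp
        calc (1 - t) ^ n * (1 / (-Real.log t)) ^ K
            ≤ (1 - t) ^ n * (1 / (1 - t)) ^ K :=
              mul_le_mul_of_nonneg_left hpow (by positivity)
          _ = (1 - t) ^ (n - K) := h2
          _ ≤ 1 := pow_le_one₀ h1t.le (by linarith [ht.1])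
      calc v t = Real.Gamma K / (((n !)) : ℝ) * ((1 - t) ^ n * (1 / (-Real.log t)) ^ K) := by
            rw [hv']; ring
        _ ≤ Real.Gamma K / (((n !)) : ℝ) * 1 :=
            mul_le_mul_of_nonneg_left e1 (by positivity)
        _ = Real.Gamma K / (((n !)) : ℝ) := mul_one _
    have hle : (∫⁻ t in Ioo (0:ℝ) 1, ENNReal.ofReal (v t))
        ≤ ∫⁻ _ in Ioo (0:ℝ) 1, ENNReal.ofReal (Real.Gamma K / (((n !)) : ℝ)) := by
      refine lintegral_mono_ae ?_
      filter_upwards [ae_restrict_mem measurableSet_Ioo] with t ht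
      exact ENNReal.ofReal_le_ofReal (hbound t ht)
    refine ne_top_of_le_ne_top ?_ hle
    rw [setLIntegral_const]
    exact (ENNReal.mul_lt_top ENNReal.ofReal_lt_top measure_Ioo_lt_top).ne
  -- value of the lower bound integral
  set w : ℝ := Real.Gamma K / (((n !)) : ℝ)
      * ((((n - K)!) : ℝ) / ∏ j ∈ Finset.range (n - K + 1), ((K:ℝ) + 1 + j)) with hwdef
  have hprodpos : (0:ℝ) < ∏ j ∈ Finset.range (n - K + 1), ((K:ℝ) + 1 + j) :=
    Finset.prod_pos fun j _ => by positivity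
  have hwpos : 0 ≤ w := by
    rw [hwdef]
    have : (0:ℝ) < (((n - K)!) : ℝ) := by positivity
    positivity
  have hlowint : IntegrableOn low (Ioo (0:ℝ) 1) := by
    apply Measure.integrableOn_of_bounded (M := Real.Gamma K / (((n !)) : ℝ))
    · exact (measure_Ioo_lt_top).ne
    · exact ((aux_meas1 (K:ℝ) (n - K)).const_mul _).aestronglyMeasurable
    · filter_upwards [ae_restrict_mem measurableSet_Ioo] with t ht
      have h1 : t ^ (K:ℝ) ≤ 1 := Real.rpow_le_one ht.1.le ht.2.le hKpos.le
      have h2 : (1 - t) ^ (n - K) ≤ 1 := pow_le_one₀ (by linarith [ht.2]) (by linarith [ht.1])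
      have h3 : (0:ℝ) ≤ t ^ (K:ℝ) := Real.rpow_nonneg ht.1.le _
      have h4 : (0:ℝ) ≤ (1 - t) ^ (n - K) := pow_nonneg (by linarith [ht.2]) _
      rw [hlowdef]; simp only
      rw [Real.norm_eq_abs, abs_of_nonneg (by positivity)]
      have h5 : t ^ (K:ℝ) * (1 - t) ^ (n - K) ≤ 1 := by nlinarith
      nlinarith [div_nonneg hΓK.le hn0.le]
  have hlow_nonneg : 0 ≤ᵐ[volume.restrict (Ioo (0:ℝ) 1)] low := by
    filter_upwards [ae_restrict_mem measurableSet_Ioo] with t ht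
    have h3 : (0:ℝ) ≤ t ^ (K:ℝ) := Real.rpow_nonneg ht.1.le _
    have h4 : (0:ℝ) ≤ (1 - t) ^ (n - K) := pow_nonneg (by linarith [ht.2]) _
    rw [hlowdef]; simp only
    positivity
  have hlowval : (∫ t in Ioo (0:ℝ) 1, low t) = w := by
    rw [hlowdef]; simp only
    rw [integral_const_mul, aux_beta hKpos (n - K), hwdef]
  have hofReal_low : ENNReal.ofReal w ≤ ∫⁻ t in Ioo (0:ℝ) 1, ENNReal.ofReal (v t) := by
    rw [← hlowval, ofReal_integral_eq_lintegral_ofReal hlowint hlow_nonneg]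
    refine lintegral_mono_ae ?_
    filter_upwards [ae_restrict_mem measurableSet_Ioo] with t ht
    exact ENNReal.ofReal_le_ofReal (hlow_le t ht)
  -- Gamma constants
  have g1 : Real.Gamma (K:ℝ) = ((((K-1)!)) : ℝ) := by
    rw [show ((K:ℝ)) = (((K-1 : ℕ)) : ℝ) + 1 by rw [Nat.cast_sub hK]; push_cast; ring]
    exact Real.Gamma_nat_eq_factorial (K-1)
  have g2 : Real.Gamma ((K:ℝ) + 1) = (((K !)) : ℝ) := Real.Gamma_nat_eq_factorial K
  have g3 : Real.Gamma ((((n+2:ℕ)):ℝ) - (K:ℝ) - 1) = ((((n-K)!)) : ℝ) := by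
    rw [show (((n+2:ℕ)):ℝ) - (K:ℝ) - 1 = (((n - K:ℕ)) : ℝ) + 1 by
      rw [Nat.cast_sub hKn]; push_cast; ring]
    exact Real.Gamma_nat_eq_factorial (n - K)
  have g4 : Real.Gamma ((((n+2:ℕ)):ℝ) - 1) = (((n !)) : ℝ) := by
    rw [show (((n+2:ℕ)):ℝ) - 1 = ((n:ℕ) : ℝ) + 1 by push_cast; ring]
    exact Real.Gamma_nat_eq_factorial n
  have g5 : Real.Gamma ((((n+2:ℕ)):ℝ)) = ((((n+1)!)) : ℝ) := by
    rw [show (((n+2:ℕ)):ℝ) = (((n+1:ℕ)) : ℝ) + 1 by push_cast; ring]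
    exact Real.Gamma_nat_eq_factorial (n + 1)
  have hprod : ∏ j ∈ Finset.range (n - K + 1), ((K:ℝ) + 1 + j)
      = ((((n+1)!)) : ℝ) / (((K !)) : ℝ) := by
    have h := aux_prod_fact K (n - K + 1)
    rw [show K + (n - K + 1) = n + 1 by omega] at h
    rw [eq_div_iff (show (((K !)) : ℝ) ≠ 0 by positivity)]
    linarith
  have hconst : Real.Gamma (K:ℝ) * Real.Gamma ((K:ℝ) + 1)
      * Real.Gamma ((((n+2:ℕ)):ℝ) - (K:ℝ) - 1)
      / (Real.Gamma ((((n+2:ℕ)):ℝ) - 1) * Real.Gamma ((((n+2:ℕ)):ℝ))) = w := by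
    rw [hwdef, hprod, g1, g2, g3, g4, g5]
    have c1 : (((K !)) : ℝ) ≠ 0 := by positivity
    have c2 : (((n !)) : ℝ) ≠ 0 := by positivity
    have c3 : ((((n+1)!)) : ℝ) ≠ 0 := by positivity
    field_simp
  -- nonnegativity and measurability of f
  have hnn : 0 ≤ᵐ[volume.restrict (Ioi (0:ℝ))] f := by
    filter_upwards [ae_restrict_mem measurableSet_Ioi] with α hα
    have hc : (0:ℝ) < ((n+2:ℕ) : ℝ) := by positivity
    have hΓ1 : 0 < Real.Gamma (1 + α) := Real.Gamma_pos_of_pos (by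
      simp only [mem_Ioi] at hα; linarith)
    have hΓ2 : 0 < Real.Gamma (α + ((n+2:ℕ) : ℝ)) := Real.Gamma_pos_of_pos (by
      simp only [mem_Ioi] at hα; linarith)
    rw [hfdef]; simp only
    have hα' : (0:ℝ) < α := hα
    exact mul_nonneg (pow_nonneg hα'.le _) (div_nonneg hΓ1.le hΓ2.le)
  have hmeasf : AEStronglyMeasurable f (volume.restrict (Ioi (0:ℝ))) := by
    refine (aux_meas3 (K-1) (n+1)).aestronglyMeasurable.congr ?_
    filter_upwards [ae_restrict_mem measurableSet_Ioi] with α hα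
    rw [hfdef]; simp only
    rw [hf α hα, hPdef]
  have hieq : (∫ α in Ioi (0:ℝ), f α)
      = (∫⁻ α in Ioi (0:ℝ), ENNReal.ofReal (f α)).toReal :=
    integral_eq_lintegral_of_nonneg_ae hnn hmeasf
  rw [hconst]
  calc w = (ENNReal.ofReal w).toReal := (ENNReal.toReal_ofReal hwpos).symm
    _ ≤ (∫⁻ α in Ioi (0:ℝ), ENNReal.ofReal (f α)).toReal := by
        apply ENNReal.toReal_mono (by rw [hL]; exact hvfin)
        rw [hL]; exact hofReal_low
    _ = ∫ α in Ioi (0:ℝ), f α := hieq.symm
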